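/- (Neymanian decomposition) Let N ≥ 4 and let r(0), r(1) ≥ 2 be integers with r(0) + r(1) = N. Let Y_i(0), Y_i(1), i = 1,…,N, be fixed reals, τ_i = Y_i(1) − Y_i(0), Ȳ(z) = (1/N)Σ_i Y_i(z), τ̄ = (1/N)Σ_i τ_i, S(z,z) = (1/(N−1)) Σ_{i=1}^N (Y_i(z) − Ȳ(z))², and S(τ,τ) = (1/(N−1)) Σ_{i=1}^N (τ_i − τ̄)². Under the completely randomized assignment that chooses a subset S ⊆ {1,…,N} with |S| = r(1) uniformly at random (units in S receive treatment 1, the others receive treatment 0), the estimator τ̂(S) = (1/r(1)) Σ_{i∈S} Y_i(1) − (1/r(0)) Σ_{i∉S} Y_i(0) satisfies E[τ̂] = Ȳ(1) − Ȳ(0) and Var(τ̂) = S(0,0)/r(0) + S(1,1)/r(1) − S(τ,τ)/N. -/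

import Mathlib

open Finset

lemma card_supersets {α : Type*} [DecidableEq α] (u T : Finset α) (hT : T ⊆ u) (r : ℕ)
    (hr : T.card ≤ r) :
    ((u.powersetCard r).filter (fun S => T ⊆ S)).card = (u.card - T.card).choose (r - T.card) := by
  rw [← card_sdiff_of_subset hT, ← card_powersetCard (r - T.card) (u \ T)]
  apply Finset.card_bij (fun S _ => S \ T)
  · intro S hS
    simp only [mem_filter, mem_powersetCard] at hS
    rw [mem_powersetCard]
    exact ⟨sdiff_subset_sdiff hS.1.1 le_rfl, by rw [card_sdiff_of_subset hS.2, hS.1.2]⟩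
  · intro S1 h1 S2 h2 h
    simp only [mem_filter, mem_powersetCard] at h1 h2
    rw [← sdiff_union_of_subset h1.2, ← sdiff_union_of_subset h2.2, h]
  · intro R hR
    rw [mem_powersetCard] at hR
    have hdisj : Disjoint R T := (subset_sdiff.mp hR.1).2
    refine ⟨R ∪ T, ?_, ?_⟩
    · simp only [mem_filter, mem_powersetCard]
      refine ⟨⟨union_subset ((subset_sdiff.mp hR.1).1) hT, ?_⟩, subset_union_right⟩
      rw [card_union_of_disjoint hdisj, hR.2]
      omega
    · rw [union_sdiff_right, sdiff_eq_self_of_disjoint hdisj]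

lemma sum_ind {N : ℕ} (S : Finset (Fin N)) (h : Fin N → ℝ) :
    ∑ i ∈ S, h i = ∑ i, if i ∈ S then h i else 0 := by
  rw [Finset.sum_ite_mem, univ_inter]

lemma count_one {N r : ℕ} (hr : 1 ≤ r) (i : Fin N) :
    (((univ : Finset (Fin N)).powersetCard r).filter (fun S => i ∈ S)).card
      = (N - 1).choose (r - 1) := by
  have := card_supersets (univ : Finset (Fin N)) {i} (by simp) r (by simpa using hr)
  simpa using this

lemma count_two {N r : ℕ} (hr : 2 ≤ r) {i j : Fin N} (hij : i ≠ j) :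
    (((univ : Finset (Fin N)).powersetCard r).filter (fun S => i ∈ S ∧ j ∈ S)).card
      = (N - 2).choose (r - 2) := by
  have h2 : ({i, j} : Finset (Fin N)).card = 2 := by
    rw [card_insert_of_notMem (by simpa using hij), card_singleton]
  have := card_supersets (univ : Finset (Fin N)) {i, j} (by simp) r (by omega)
  rw [h2, card_univ, Fintype.card_fin] at this
  rw [← this]
  congr 1
  ext S
  simp [insert_subset_iff]

lemma sum_pc_linear {N r : ℕ} (hr : 1 ≤ r) (f : Fin N → ℝ) :
    ∑ S ∈ powersetCard r (univ : Finset (Fin N)), ∑ i ∈ S, f i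
      = ((N - 1).choose (r - 1) : ℝ) * ∑ i, f i := by
  calc ∑ S ∈ powersetCard r (univ : Finset (Fin N)), ∑ i ∈ S, f i
      = ∑ S ∈ powersetCard r (univ : Finset (Fin N)), ∑ i, if i ∈ S then f i else 0 := by
        exact Finset.sum_congr rfl fun S _ => sum_ind S f
    _ = ∑ i, ∑ S ∈ powersetCard r (univ : Finset (Fin N)), if i ∈ S then f i else 0 :=
        Finset.sum_comm
    _ = ∑ i : Fin N, ((N - 1).choose (r - 1) : ℝ) * f i := by
        refine Finset.sum_congr rfl fun i _ => ?_
        rw [← Finset.sum_filter, Finset.sum_const, count_one hr i, nsmul_eq_mul]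
    _ = ((N - 1).choose (r - 1) : ℝ) * ∑ i, f i := by rw [← Finset.mul_sum]

lemma sum_pc_sq {N r : ℕ} (hr : 2 ≤ r) (g : Fin N → ℝ) :
    ∑ S ∈ powersetCard r (univ : Finset (Fin N)), (∑ i ∈ S, g i) ^ 2
      = ((N - 1).choose (r - 1) : ℝ) * ∑ i, g i ^ 2
        + ((N - 2).choose (r - 2) : ℝ) * ((∑ i, g i) ^ 2 - ∑ i, g i ^ 2) := by
  have step1 : ∀ S ∈ powersetCard r (univ : Finset (Fin N)),
      (∑ i ∈ S, g i) ^ 2 = ∑ i, ∑ j, if i ∈ S ∧ j ∈ S then g i * g j else 0 := by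
    intro S _
    rw [sq, Finset.sum_mul_sum, sum_ind S (fun i => ∑ j ∈ S, g i * g j)]
    refine Finset.sum_congr rfl fun i _ => ?_
    split_ifs with h
    · rw [sum_ind S (fun j => g i * g j)]
      exact Finset.sum_congr rfl fun j _ => by simp [h]
    · simp [h]
  rw [Finset.sum_congr rfl step1, Finset.sum_comm]
  have step2 : ∀ i : Fin N,
      ∑ S ∈ powersetCard r (univ : Finset (Fin N)), ∑ j, (if i ∈ S ∧ j ∈ S then g i * g j else 0)
        = ∑ j, (if i = j then ((N-1).choose (r-1) : ℝ) else ((N-2).choose (r-2) : ℝ)) * (g i * g j) := by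
    intro i
    rw [Finset.sum_comm]
    refine Finset.sum_congr rfl fun j _ => ?_
    rw [← Finset.sum_filter, Finset.sum_const, nsmul_eq_mul]
    by_cases hij : i = j
    · subst hij
      simp only [and_self, if_pos rfl]
      congr 2
      rw [← count_one (by omega : 1 ≤ r) i]
    · rw [if_neg hij, count_two hr hij]
  rw [Finset.sum_congr rfl (fun i _ => step2 i)]
  have expand : ∀ i j : Fin N,
      (if i = j then ((N-1).choose (r-1) : ℝ) else ((N-2).choose (r-2) : ℝ)) * (g i * g j)
        = ((N-2).choose (r-2) : ℝ) * (g i * g j)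
          + (if i = j then (((N-1).choose (r-1) : ℝ) - ((N-2).choose (r-2) : ℝ)) * (g i * g j) else 0) := by
    intro i j; split_ifs <;> ring
  simp only [expand, Finset.sum_add_distrib]
  have diag : ∀ i : Fin N,
      ∑ j, (if i = j then (((N-1).choose (r-1) : ℝ) - ((N-2).choose (r-2) : ℝ)) * (g i * g j) else 0)
        = (((N-1).choose (r-1) : ℝ) - ((N-2).choose (r-2) : ℝ)) * g i ^ 2 := by
    intro i
    rw [Finset.sum_ite_eq univ i (fun j => (((N-1).choose (r-1) : ℝ) - ((N-2).choose (r-2) : ℝ)) * (g i * g j))]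
    simp [sq]
  simp only [diag]
  simp only [← Finset.mul_sum, ← Finset.sum_mul]
  ring_nf

lemma sum_sub_sq {N : ℕ} (f : Fin N → ℝ) (c : ℝ) :
    ∑ i, (f i - c) ^ 2 = (∑ i, f i ^ 2) - 2 * c * (∑ i, f i) + N * c ^ 2 := by
  have h : ∀ i ∈ (univ : Finset (Fin N)), (f i - c) ^ 2 = f i ^ 2 - 2 * c * f i + c ^ 2 :=
    fun i _ => by ring
  rw [Finset.sum_congr rfl h, Finset.sum_add_distrib, Finset.sum_sub_distrib, ← Finset.mul_sum,
    Finset.sum_const, card_univ, Fintype.card_fin, nsmul_eq_mul]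


/-- Expectation under the completely randomized assignment that chooses a
subset `S ⊆ {1,…,N}` of size `r1` uniformly at random. -/
noncomputable def crExpect (N r1 : ℕ) (f : Finset (Fin N) → ℝ) : ℝ :=
  (∑ S ∈ Finset.powersetCard r1 (univ : Finset (Fin N)), f S) / (N.choose r1 : ℝ)

/-- The treatment effect estimator
`τ̂(S) = (1/r1)∑_{i∈S} Y_i(1) − (1/r0)∑_{i∉S} Y_i(0)`
(units in `S` receive treatment 1, the rest receive treatment 0). -/
noncomputable def tauHatCR {N : ℕ} (r0 r1 : ℕ) (Y0 Y1 : Fin N → ℝ)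
    (S : Finset (Fin N)) : ℝ :=
  (1 / (r1 : ℝ)) * ∑ i ∈ S, Y1 i - (1 / (r0 : ℝ)) * ∑ i ∈ Sᶜ, Y0 i

set_option maxHeartbeats 1600000 in
/-- Neymanian decomposition: under completely randomized assignment of `r1`
units to treatment 1 and `r0 = N − r1` units to treatment 0, the estimator
`τ̂` is unbiased for `Ȳ(1) − Ȳ(0)` and its sampling variance is
`S(0,0)/r0 + S(1,1)/r1 − S(τ,τ)/N`. -/
theorem neymanian_decomposition {N : ℕ} (hN : 4 ≤ N) (r0 r1 : ℕ)
    (hr0 : 2 ≤ r0) (hr1 : 2 ≤ r1) (hsum : r0 + r1 = N)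
    (Y0 Y1 : Fin N → ℝ) :
    crExpect N r1 (tauHatCR r0 r1 Y0 Y1) =
      (∑ i, Y1 i) / N - (∑ i, Y0 i) / N ∧
    crExpect N r1 (fun S =>
        (tauHatCR r0 r1 Y0 Y1 S - crExpect N r1 (tauHatCR r0 r1 Y0 Y1)) ^ 2) =
      (1 / ((N : ℝ) - 1)) * (∑ i, (Y0 i - (∑ j, Y0 j) / N) ^ 2) / r0
        + (1 / ((N : ℝ) - 1)) * (∑ i, (Y1 i - (∑ j, Y1 j) / N) ^ 2) / r1
        - (1 / ((N : ℝ) - 1)) *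
            (∑ i, ((Y1 i - Y0 i) - (∑ j, (Y1 j - Y0 j)) / N) ^ 2) / N := by
  -- notation
  set a0 : ℝ := ∑ i, Y0 i with ha0
  set a1 : ℝ := ∑ i, Y1 i with ha1
  have hr0r : ((r0 : ℝ)) ≠ 0 := by positivity
  have hr1r : ((r1 : ℝ)) ≠ 0 := by positivity
  have hNne : ((N : ℝ)) ≠ 0 := by positivity
  have hN1ne : ((N : ℝ)) - 1 ≠ 0 := by
    have : (4 : ℝ) ≤ (N : ℝ) := by exact_mod_cast hN
    linarith
  have hNr : ((N : ℝ)) = (r0 : ℝ) + (r1 : ℝ) := by exact_mod_cast hsum.symm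
  set C : ℝ := (N.choose r1 : ℝ) with hCdef
  set C1 : ℝ := ((N - 1).choose (r1 - 1) : ℝ) with hC1def
  set C2 : ℝ := ((N - 2).choose (r1 - 2) : ℝ) with hC2def
  set E : ℝ := crExpect N r1 (tauHatCR r0 r1 Y0 Y1) with hEdef
  have hCne : C ≠ 0 := by
    have := Nat.choose_pos (show r1 ≤ N by omega)
    positivity
  -- choose relations
  have h1 : (N : ℝ) * C1 = C * r1 := by
    have hnat : N * (N - 1).choose (r1 - 1) = N.choose r1 * r1 := by
      have := Nat.add_one_mul_choose_eq (N - 1) (r1 - 1)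
      have e1 : N - 1 + 1 = N := by omega
      have e2 : r1 - 1 + 1 = r1 := by omega
      simpa [Nat.succ_eq_add_one, e1, e2] using this
    rw [hCdef, hC1def]
    exact_mod_cast hnat
  have h2 : ((N : ℝ) - 1) * C2 = C1 * ((r1 : ℝ) - 1) := by
    have hnat : (N - 1) * (N - 2).choose (r1 - 2) = (N - 1).choose (r1 - 1) * (r1 - 1) := by
      have := Nat.add_one_mul_choose_eq (N - 2) (r1 - 2)
      have e1 : N - 2 + 1 = N - 1 := by omega
      have e2 : r1 - 2 + 1 = r1 - 1 := by omega
      simpa [Nat.succ_eq_add_one, e1, e2] using this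
    have := hnat
    have c1 : ((N - 1 : ℕ) : ℝ) = (N : ℝ) - 1 := by
      rw [Nat.cast_sub (by omega : 1 ≤ N), Nat.cast_one]
    have c2 : ((r1 - 1 : ℕ) : ℝ) = (r1 : ℝ) - 1 := by
      rw [Nat.cast_sub (by omega : 1 ≤ r1), Nat.cast_one]
    calc ((N : ℝ) - 1) * C2 = ((N - 1 : ℕ) : ℝ) * ((N - 2).choose (r1 - 2) : ℝ) := by
          rw [c1]
      _ = ((N - 1).choose (r1 - 1) : ℝ) * ((r1 - 1 : ℕ) : ℝ) := by exact_mod_cast hnat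
      _ = C1 * ((r1 : ℝ) - 1) := by rw [c2]
  have hC1 : C1 = C * r1 / N := by
    field_simp
    linarith [h1]
  have hC2 : C2 = C * r1 * ((r1 : ℝ) - 1) / ((N : ℝ) * ((N : ℝ) - 1)) := by
    rw [hC1] at h2
    rw [eq_div_iff (by exact mul_ne_zero hNne hN1ne)]
    field_simp at h2 ⊢
    linarith [h2]
  -- rewrite tauHat in terms of g
  set g : Fin N → ℝ := fun i => Y1 i / r1 + Y0 i / r0 with hg
  have htau : ∀ S : Finset (Fin N),
      tauHatCR r0 r1 Y0 Y1 S = (∑ i ∈ S, g i) - a0 / r0 := by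
    intro S
    have hcompl : ∑ i ∈ Sᶜ, Y0 i = a0 - ∑ i ∈ S, Y0 i := by
      have := Finset.sum_compl_add_sum S Y0
      rw [ha0]; linarith
    have hgS : ∑ i ∈ S, g i = (∑ i ∈ S, Y1 i) / r1 + (∑ i ∈ S, Y0 i) / r0 := by
      simp only [hg]
      rw [Finset.sum_add_distrib, ← Finset.sum_div, ← Finset.sum_div]
    rw [tauHatCR, hcompl, hgS]
    ring
  -- scalar sums
  set b0 : ℝ := ∑ i, Y0 i ^ 2 with hb0
  set b1 : ℝ := ∑ i, Y1 i ^ 2 with hb1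
  set c01 : ℝ := ∑ i, Y0 i * Y1 i with hc01
  have hTg : ∑ i, g i = a1 / r1 + a0 / r0 := by
    simp only [hg]
    rw [Finset.sum_add_distrib, ← Finset.sum_div, ← Finset.sum_div]
  have hQ : ∑ i, g i ^ 2 = b1 / (r1 : ℝ)^2 + 2 * c01 / ((r0 : ℝ) * r1) + b0 / (r0 : ℝ)^2 := by
    have hpt : ∀ i ∈ (univ : Finset (Fin N)),
        g i ^ 2 = Y1 i ^ 2 / (r1 : ℝ)^2 + 2 * (Y0 i * Y1 i) / ((r0 : ℝ) * r1) + Y0 i ^ 2 / (r0 : ℝ)^2 := by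
      intro i _
      simp only [hg]
      field_simp
      ring
    rw [Finset.sum_congr rfl hpt, Finset.sum_add_distrib, Finset.sum_add_distrib,
      ← Finset.sum_div, ← Finset.sum_div, ← Finset.sum_div, ← Finset.mul_sum]
  -- expectation of tauHat
  have hsumlin : ∑ S ∈ powersetCard r1 (univ : Finset (Fin N)), tauHatCR r0 r1 Y0 Y1 S
      = C1 * (∑ i, g i) - C * (a0 / r0) := by
    rw [Finset.sum_congr rfl (fun S _ => htau S), Finset.sum_sub_distrib,
      sum_pc_linear (by omega : 1 ≤ r1) g, Finset.sum_const, card_powersetCard,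
      card_univ, Fintype.card_fin, nsmul_eq_mul]
  have hE : E = a1 / N - a0 / N := by
    rw [hEdef]
    simp only [crExpect]
    rw [hsumlin, hTg, hC1, hNr]
    rw [← hCdef]
    field_simp
    ring
  refine ⟨hE, ?_⟩
  -- variance
  set μ : ℝ := C1 * (∑ i, g i) / C with hμ
  have hEμ : E = μ - a0 / r0 := by
    rw [hEdef]
    simp only [crExpect]
    rw [hsumlin, hμ, sub_div, mul_div_cancel_left₀ _ hCne]
  have hdev : ∀ S : Finset (Fin N),
      tauHatCR r0 r1 Y0 Y1 S - E = (∑ i ∈ S, g i) - μ := by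
    intro S
    rw [htau S, hEμ]
    ring
  have hsq : ∑ S ∈ powersetCard r1 (univ : Finset (Fin N)),
      (tauHatCR r0 r1 Y0 Y1 S - E) ^ 2
      = (C1 * ∑ i, g i ^ 2 + C2 * ((∑ i, g i) ^ 2 - ∑ i, g i ^ 2))
        - 2 * μ * (C1 * (∑ i, g i)) + C * μ ^ 2 := by
    have hpt : ∀ S ∈ powersetCard r1 (univ : Finset (Fin N)),
        (tauHatCR r0 r1 Y0 Y1 S - E) ^ 2
          = (∑ i ∈ S, g i) ^ 2 - 2 * μ * (∑ i ∈ S, g i) + μ ^ 2 := by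
      intro S _
      rw [hdev S]
      ring
    rw [Finset.sum_congr rfl hpt, Finset.sum_add_distrib, Finset.sum_sub_distrib,
      sum_pc_sq hr1 g, ← Finset.mul_sum, sum_pc_linear (by omega : 1 ≤ r1) g,
      Finset.sum_const, card_powersetCard, card_univ, Fintype.card_fin, nsmul_eq_mul]
  simp only [crExpect]
  rw [hsq]
  -- rewrite RHS sums
  have hRHS0 : ∑ i, (Y0 i - a0 / N) ^ 2 = b0 - 2 * (a0 / N) * a0 + N * (a0 / N) ^ 2 := by
    rw [sum_sub_sq Y0 (a0 / N), ← ha0, ← hb0]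
  have hRHS1 : ∑ i, (Y1 i - a1 / N) ^ 2 = b1 - 2 * (a1 / N) * a1 + N * (a1 / N) ^ 2 := by
    rw [sum_sub_sq Y1 (a1 / N), ← ha1, ← hb1]
  have hsumτ : ∑ j, (Y1 j - Y0 j) = a1 - a0 := by
    rw [Finset.sum_sub_distrib, ha0, ha1]
  have hsumτsq : ∑ i, (Y1 i - Y0 i) ^ 2 = b1 - 2 * c01 + b0 := by
    have hpt : ∀ i ∈ (univ : Finset (Fin N)),
        (Y1 i - Y0 i) ^ 2 = Y1 i ^ 2 - 2 * (Y0 i * Y1 i) + Y0 i ^ 2 := fun i _ => by ring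
    rw [Finset.sum_congr rfl hpt, Finset.sum_add_distrib, Finset.sum_sub_distrib,
      ← Finset.mul_sum, hb0, hb1, hc01]
  have hRHSτ : ∑ i, ((Y1 i - Y0 i) - (∑ j, (Y1 j - Y0 j)) / N) ^ 2
      = (b1 - 2 * c01 + b0) - 2 * ((a1 - a0) / N) * (a1 - a0) + N * ((a1 - a0) / N) ^ 2 := by
    rw [hsumτ, sum_sub_sq (fun i => Y1 i - Y0 i) ((a1 - a0) / N), hsumτ, hsumτsq]
  rw [hRHS0, hRHS1, hRHSτ, hμ, hTg, hQ, hC1, hC2, hNr]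
  rw [hNr] at hNne hN1ne
  rw [← hCdef]
  field_simp
  ring
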